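/- If x ∈ TL(D_n)_ε satisfies: x is a nonzero idempotent, s₀xs₀ = x, and xU_i = 0 = U_ix for i = 0,…,n-1, then x = d_{n,ε}. Moreover b_{n,η,ε} = (1/2)(d_{n,ε} + η·s₀d_{n,ε}) for η ∈ {+,-}. -/

import Mathlib

/-! Type `D_n` uniqueness: `d_{n,ε}` is the unique non-zero idempotent in
`TL(D_n)_ε` with `s₀xs₀ = x` killed by all `U_i`, `i = 0,…,n-1`; moreover
`b_{n,η,ε} = (d_{n,ε} + η s₀d_{n,ε})/2` for `η = ±1`. -/

noncomputable section

abbrev Kq : Type := RatFunc ℂ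

def qq : Kq := RatFunc.X

/-- The quantum integer `[m] = (q^m - q^{-m})/(q - q⁻¹)` in `ℂ(q)`. -/
def qint (m : ℤ) : Kq := (qq ^ m - qq ^ (-m)) / (qq - qq⁻¹)

/-- Generators of the type `B` Temperley–Lieb algebra: `none` is `s₀`, and
`some i` is the cup-cap generator `U_{i+1}`. -/
def g : Option ℕ → FreeAlgebra Kq (Option ℕ) := FreeAlgebra.ι Kq

/-- The defining relations of the (specialized) type `B` Temperley–Lieb
algebra (on infinitely many strands, so that `TL(B_n)` sits inside for
every `n`): `U_i² = -ε(q+q⁻¹)U_i`, distant commutativity,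
`U_i U_{i±1} U_i = U_i`, `s₀² = 1`, `U₁ s₀ U₁ = 0` and `s₀ U_i = U_i s₀`
for `i ≥ 2`.  (Recall `some i` stands for `U_{i+1}`.) -/
inductive TLBRel (ε : Kq) : FreeAlgebra Kq (Option ℕ) → FreeAlgebra Kq (Option ℕ) → Prop
  | Usq (i : ℕ) :
      TLBRel ε (g (some i) * g (some i)) ((-(ε * (qq + qq⁻¹))) • g (some i))
  | Ucomm (i j : ℕ) (h : i + 2 ≤ j) :
      TLBRel ε (g (some i) * g (some j)) (g (some j) * g (some i))
  | Ubraid1 (i : ℕ) :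
      TLBRel ε (g (some i) * g (some (i+1)) * g (some i)) (g (some i))
  | Ubraid2 (i : ℕ) :
      TLBRel ε (g (some (i+1)) * g (some i) * g (some (i+1))) (g (some (i+1)))
  | s0sq : TLBRel ε (g none * g none) 1
  | UsU : TLBRel ε (g (some 0) * g none * g (some 0)) 0
  | scomm (i : ℕ) (h : 1 ≤ i) :
      TLBRel ε (g none * g (some i)) (g (some i) * g none)

/-- The (specialized) type `B` Temperley–Lieb algebra `TL(B)_ε` (on
infinitely many strands). -/
abbrev TLB (ε : Kq) := RingQuot (TLBRel ε)

/-- The generator `s₀` of `TL(B)_ε`. -/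
def s0 (ε : Kq) : TLB ε := RingQuot.mkAlgHom Kq (TLBRel ε) (g none)

/-- The generator `U_i` of `TL(B)_ε`, for `i ≥ 1`. -/
def UU (ε : Kq) (i : ℕ) : TLB ε := RingQuot.mkAlgHom Kq (TLBRel ε) (g (some (i - 1)))

/-- The subalgebra `TL(B_n)_ε ⊆ TL(B)_ε`, generated by `s₀, U₁, …, U_{n-1}`. -/
def TLBsub (ε : Kq) (n : ℕ) : Subalgebra Kq (TLB ε) :=
  Algebra.adjoin Kq ({s0 ε} ∪ {x | ∃ i, 1 ≤ i ∧ i ≤ n - 1 ∧ x = UU ε i})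

/-- The type `D` generators: `UD 0 = U₀ = s₀U₁s₀` and `UD i = U_i` for `i ≥ 1`. -/
def UD (ε : Kq) (i : ℕ) : TLB ε :=
  if i = 0 then s0 ε * UU ε 1 * s0 ε else UU ε i

/-- The subalgebra `TL(D_n)_ε ⊆ TL(B)_ε`, generated by `U₀, U₁, …, U_{n-1}`. -/
def TLDsub (ε : Kq) (n : ℕ) : Subalgebra Kq (TLB ε) :=
  Algebra.adjoin Kq {x | ∃ i ≤ n - 1, x = UD ε i}

/-- The type `B_n` Jones–Wenzl projectors `b_{n,η,ε}` (for `η = ±1`), defined by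
`b_{1,η,ε} = (1 + η s₀)/2` and the recursion
`b_{n+1,η,ε} = b_{n,η,ε} + ε (q^{n-1}+q^{-(n-1)})/(q^n+q^{-n}) · b_{n,η,ε} U_n b_{n,η,ε}`. -/
def bB (ε η : Kq) : ℕ → TLB ε
  | 0 => 1
  | 1 => (2 : Kq)⁻¹ • (1 + η • s0 ε)
  | (n+2) =>
      bB ε η (n+1) +
        (ε * (qq ^ n + qq⁻¹ ^ n) / (qq ^ (n+1) + qq⁻¹ ^ (n+1))) •
          (bB ε η (n+1) * UU ε (n+1) * bB ε η (n+1))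

/-- The type `D_n` Jones–Wenzl projector `d_{n,ε} = b_{n,+,ε} + b_{n,-,ε}`. -/
def dD (ε : Kq) (n : ℕ) : TLB ε := bB ε 1 n + bB ε (-1) n

/-! ### Auxiliary scalar lemmas -/

theorem two_ne : (2 : Kq) ≠ 0 := by
  intro h
  have h1 : algebraMap (Polynomial ℂ) Kq 2 = 0 := by rw [map_ofNat]; exact h
  have h2 : (2 : Polynomial ℂ) = 0 :=
    (map_eq_zero_iff _ (RatFunc.algebraMap_injective ℂ)).mp h1
  have := congrArg (Polynomial.eval 0) h2
  simp at this

theorem pow_sum_ne (m : ℕ) : qq ^ m + qq⁻¹ ^ m ≠ 0 := by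
  intro h
  have h0 : qq ≠ 0 := RatFunc.X_ne_zero
  have h2 : qq ^ m * (qq ^ m + qq⁻¹ ^ m) = qq ^ (2*m) + 1 := by
    rw [mul_add, ← pow_add, ← mul_pow, mul_inv_cancel₀ h0, one_pow, ← two_mul]
  rw [h, mul_zero] at h2
  have h3 : (qq : Kq) ^ (2*m) + 1 = algebraMap (Polynomial ℂ) Kq (Polynomial.X ^ (2*m) + 1) := by
    simp [qq, RatFunc.algebraMap_X]
  rw [h3] at h2
  have h4 : (Polynomial.X ^ (2*m) + 1 : Polynomial ℂ) = 0 :=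
    (map_eq_zero_iff _ (RatFunc.algebraMap_injective ℂ)).mp h2.symm
  have h5 := congrArg (Polynomial.eval 1) h4
  simp at h5

def dlt (ε : Kq) : Kq := -(ε * (qq + qq⁻¹))

def cc (ε : Kq) : ℕ → Kq
  | 0 => 0
  | (k+1) => ε * (qq ^ k + qq⁻¹ ^ k) / (qq ^ (k+1) + qq⁻¹ ^ (k+1))

def gam (ε : Kq) : ℕ → Kq
  | 0 => 0
  | 1 => (2 : Kq)⁻¹ * dlt ε
  | (k+2) => dlt ε + cc ε (k+1)

theorem hscal_aux (ε q p A B C : Kq) (he : ε * ε = 1) (hq : q * p = 1)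
    (hB : B ≠ 0) (hC : C ≠ 0) (key : (q + p) * B = C + q * p * A) :
    1 + ε * B / C * (-(ε * (q + p)) + ε * A / B) = 0 := by
  have hinner : -(ε * (q + p)) + ε * A / B = ε * (-C) / B := by
    rw [eq_div_iff hB, add_mul, div_mul_cancel₀ _ hB]
    linear_combination (-ε) * key + (-ε*A) * hq
  rw [hinner]
  field_simp
  linear_combination (-1 : Kq) * he

theorem hscal_aux0 (ε q p : Kq) (he : ε * ε = 1) (h1 : q + p ≠ 0) :
    1 + ε * (1 + 1) / (q + p) * ((2:Kq)⁻¹ * -(ε * (q + p))) = 0 := by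
  have h2 : (2:Kq) ≠ 0 := two_ne
  field_simp
  linear_combination (-2 : Kq) * he

theorem hscal (ε : Kq) (he : ε * ε = 1) (k : ℕ) : 1 + cc ε (k+1) * gam ε (k+1) = 0 := by
  have h0 : qq ≠ 0 := RatFunc.X_ne_zero
  have hq : qq * qq⁻¹ = 1 := mul_inv_cancel₀ h0
  match k with
  | 0 =>
    have h1 : qq + qq⁻¹ ≠ 0 := by
      have := pow_sum_ne 1; rwa [pow_one, pow_one] at this
    simpa only [cc, gam, dlt, pow_zero, zero_add, pow_one] using hscal_aux0 ε qq qq⁻¹ he h1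
  | (m+1) =>
    have hB : qq ^ (m+1) + qq⁻¹ ^ (m+1) ≠ 0 := pow_sum_ne (m+1)
    have hC : qq ^ (m+2) + qq⁻¹ ^ (m+2) ≠ 0 := pow_sum_ne (m+2)
    have key : (qq + qq⁻¹) * (qq ^ (m+1) + qq⁻¹ ^ (m+1)) =
        (qq ^ (m+2) + qq⁻¹ ^ (m+2)) + qq * qq⁻¹ * (qq ^ m + qq⁻¹ ^ m) := by ring
    simpa only [cc, gam, dlt] using
      hscal_aux ε qq qq⁻¹ (qq ^ m + qq⁻¹ ^ m) _ _ he hq hB hC key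

/-! ### Relations in `TLB ε` -/

section Rels

variable (ε η : Kq)

local notation "π" => RingQuot.mkAlgHom Kq (TLBRel ε)

def V (i : ℕ) : TLB ε := RingQuot.mkAlgHom Kq (TLBRel ε) (g (some i))

theorem rel {a b : FreeAlgebra Kq (Option ℕ)} (h : TLBRel ε a b) : π a = π b :=
  RingQuot.mkAlgHom_rel Kq h

theorem r1 (i : ℕ) : V ε i * V ε i = dlt ε • V ε i := by
  rw [V, ← map_mul, rel ε (TLBRel.Usq i), map_smul]; rfl
theorem r2 {i j : ℕ} (h : i + 2 ≤ j) : V ε i * V ε j = V ε j * V ε i := by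
  simp only [V, ← map_mul]; exact rel ε (TLBRel.Ucomm i j h)
theorem r3 (i : ℕ) : V ε i * V ε (i+1) * V ε i = V ε i := by
  simp only [V, ← map_mul]; exact rel ε (TLBRel.Ubraid1 i)
theorem r4 (i : ℕ) : V ε (i+1) * V ε i * V ε (i+1) = V ε (i+1) := by
  simp only [V, ← map_mul]; exact rel ε (TLBRel.Ubraid2 i)
theorem r5 : s0 ε * s0 ε = 1 := by
  rw [s0, ← map_mul, rel ε TLBRel.s0sq, map_one]
theorem r6 : V ε 0 * s0 ε * V ε 0 = 0 := by
  simp only [V, s0, ← map_mul]; rw [rel ε TLBRel.UsU, map_zero]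
theorem r7 {i : ℕ} (h : 1 ≤ i) : s0 ε * V ε i = V ε i * s0 ε := by
  simp only [V, s0, ← map_mul]; exact rel ε (TLBRel.scomm i h)

theorem UU_eq (i : ℕ) : UU ε i = V ε (i - 1) := rfl

theorem bB_succ (m : ℕ) : bB ε η (m+2) =
    bB ε η (m+1) + cc ε (m+1) • (bB ε η (m+1) * V ε m * bB ε η (m+1)) := rfl

end Rels

theorem negsm (ε c : Kq) (z : TLB ε) : (-c) • z = -(c • z) := neg_smul c z
theorem subsm (ε : Kq) (a b : Kq) (z : TLB ε) : (a - b) • z = a • z - b • z := sub_smul a b z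
theorem mulneg (ε : Kq) (a b : TLB ε) : a * -b = -(a * b) := mul_neg a b
theorem negmul (ε : Kq) (a b : TLB ε) : -a * b = -(a * b) := neg_mul a b
/-! ### Abstract computation lemmas -/

section Jug

variable {A : Type*} [Ring A] [Algebra Kq A]

theorem L_trace (B W X : A) (c : Kq)
    (hI : B*B = B) (hc : X*B = B*X) (hXX : X*X = dlt ε • X) (hbr : X*W*X = X) :
    X*(B + c•(B*W*B))*X = (dlt ε + c) • (B*X) := by
  have t1 : X*B*X = dlt ε • (B*X) := by
    rw [hc, mul_assoc, hXX, mul_smul_comm]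
  have t2 : X*(B*W*B)*X = B*X := by
    have e1 : X*(B*W*B)*X = X*B*W*B*X := by noncomm_ring
    rw [e1, hc, mul_assoc (B*X*W) B X]
    nth_rewrite 2 [← hc]
    rw [← mul_assoc]
    have e2 : B*X*W*X*B = B*(X*W*X)*B := by noncomm_ring
    rw [e2, hbr, mul_assoc, hc, ← mul_assoc, hI]
  rw [mul_add, add_mul, mul_smul_comm, smul_mul_assoc, t1, t2, add_smul]

theorem L_kill_r (B b W : A) (c γ : Kq)
    (hT : W*B*W = γ•(b*W)) (hA : B*b = B) (hs : 1 + c*γ = 0) :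
    (B + c•(B*W*B))*W = 0 := by
  have t2 : B*W*B*W = γ•(B*W) := by
    have e : B*W*B*W = B*(W*B*W) := by noncomm_ring
    rw [e, hT, mul_smul_comm, ← mul_assoc, hA]
  have h : (B + c•(B*W*B))*W = (1 + c*γ)•(B*W) := by
    rw [add_mul, smul_mul_assoc, t2, smul_smul, add_smul, one_smul]
  rw [h, hs, zero_smul]

theorem L_kill_l (B b W : A) (c γ : Kq)
    (hT : W*B*W = γ•(b*W)) (hc' : W*b = b*W) (hA' : b*B = B) (hs : 1 + c*γ = 0) :
    W*(B + c•(B*W*B)) = 0 := by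
  have t2 : W*(B*W*B) = γ•(W*B) := by
    have e : W*(B*W*B) = W*B*W*B := by noncomm_ring
    rw [e, hT, smul_mul_assoc, ← hc', mul_assoc, hA']
  have h : W*(B + c•(B*W*B)) = (1 + c*γ)•(W*B) := by
    rw [mul_add, mul_smul_comm, t2, smul_smul, add_smul, one_smul]
  rw [h, hs, zero_smul]

theorem L_kill_far_r (B W y : A) (c : Kq) (h1 : B*y = 0) : (B + c•(B*W*B))*y = 0 := by
  have h : B*W*B*y = B*W*(B*y) := by noncomm_ring
  rw [add_mul, smul_mul_assoc, h1, h, h1, mul_zero, smul_zero, add_zero]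

theorem L_kill_far_l (B W y : A) (c : Kq) (h2 : y*B = 0) : y*(B + c•(B*W*B)) = 0 := by
  have h : y*(B*W*B) = y*B*(W*B) := by noncomm_ring
  rw [mul_add, mul_smul_comm, h, h2, zero_mul, smul_zero, add_zero]

theorem L_absorb (B W : A) (c : Kq) (hI : B*B = B) :
    (B + c•(B*W*B))*B = B + c•(B*W*B) ∧ B*(B + c•(B*W*B)) = B + c•(B*W*B) := by
  constructor
  · have h : B*W*B*B = B*W*(B*B) := by noncomm_ring
    rw [add_mul, smul_mul_assoc, hI, h, hI]
  · have h : B*(B*W*B) = B*B*W*B := by noncomm_ring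
    rw [mul_add, mul_smul_comm, hI, h, hI]

theorem L_idem (B b W : A) (c γ : Kq)
    (hI : B*B = B) (hT : W*B*W = γ•(b*W)) (hA : B*b = B) (hs : 1 + c*γ = 0) :
    (B + c•(B*W*B))*(B + c•(B*W*B)) = B + c•(B*W*B) := by
  have t1 : B*(B*W*B) = B*W*B := by
    have e : B*(B*W*B) = B*B*W*B := by noncomm_ring
    rw [e, hI]
  have t2 : (B*W*B)*B = B*W*B := by
    have e : (B*W*B)*B = B*W*(B*B) := by noncomm_ring
    rw [e, hI]
  have t3 : (B*W*B)*(B*W*B) = γ•(B*W*B) := by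
    have e1 : (B*W*B)*(B*W*B) = B*W*(B*B)*W*B := by noncomm_ring
    rw [e1, hI]
    have e2 : B*W*B*W*B = B*(W*B*W)*B := by noncomm_ring
    rw [e2, hT, mul_smul_comm, smul_mul_assoc, ← mul_assoc, hA]
  have hcc : c + (c + c*c*γ) = c := by linear_combination c*hs
  calc (B + c•(B*W*B))*(B + c•(B*W*B))
      = B*(B + c•(B*W*B)) + c•((B*W*B)*(B + c•(B*W*B))) := by
        rw [add_mul, smul_mul_assoc]
    _ = B*B + c•(B*(B*W*B)) + (c•((B*W*B)*B + c•((B*W*B)*(B*W*B)))) := by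
        rw [mul_add, mul_add, mul_smul_comm, mul_smul_comm]
    _ = B + (c•(B*W*B) + (c•(B*W*B) + (c*c*γ)•(B*W*B))) := by
        rw [hI, t1, t2, t3, smul_add, smul_smul, smul_smul, add_assoc]
    _ = B + c•(B*W*B) := by rw [← add_smul, ← add_smul, hcc]

end Jug
section Pack

variable (ε η : Kq)

theorem half_two {M : Type*} [AddCommMonoid M] [Module Kq M] (x : M) :
    (2:Kq)⁻¹ • (x + x) = x := by
  rw [← two_smul Kq x, smul_smul, inv_mul_cancel₀ two_ne, one_smul]

/-- `V j` commutes with `b_m` for `j ≥ m`. -/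
theorem Vcomm_b : ∀ m, ∀ j, m ≤ j → V ε j * bB ε η m = bB ε η m * V ε j := by
  intro m
  induction m with
  | zero => intro j _; simp [bB]
  | succ m ih =>
    intro j hj
    match m, ih, hj with
    | 0, _, hj =>
      have h7 : s0 ε * V ε j = V ε j * s0 ε := r7 ε hj
      simp only [bB, mul_smul_comm, smul_mul_assoc, mul_add, add_mul, one_mul, mul_one, h7]
    | (m+1), ih, hj =>
      rw [bB_succ]
      have h1 := ih j (Nat.le_of_succ_le hj)
      have h2 : V ε m * V ε j = V ε j * V ε m := r2 ε hj
      rw [mul_add, add_mul, h1, mul_smul_comm, smul_mul_assoc]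
      congr 1
      rw [← mul_assoc, ← mul_assoc, h1, mul_assoc (bB ε η (m+1)), ← h2,
        ← mul_assoc, mul_assoc _ _ (bB ε η (m+1)), h1, ← mul_assoc]

theorem s_bB (hη : η * η = 1) : ∀ m, s0 ε * bB ε η (m+1) = η • bB ε η (m+1) ∧
    bB ε η (m+1) * s0 ε = η • bB ε η (m+1) := by
  intro m
  induction m with
  | zero =>
    constructor
    · show s0 ε * ((2:Kq)⁻¹ • (1 + η • s0 ε)) = η • ((2:Kq)⁻¹ • (1 + η • s0 ε))
      rw [mul_smul_comm, mul_add, mul_one, mul_smul_comm, r5,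
        smul_smul η, mul_comm η, ← smul_smul, smul_add η, smul_smul η, hη, one_smul,
        add_comm (s0 ε)]
    · show ((2:Kq)⁻¹ • (1 + η • s0 ε)) * s0 ε = η • ((2:Kq)⁻¹ • (1 + η • s0 ε))
      rw [smul_mul_assoc, add_mul, one_mul, smul_mul_assoc, r5,
        smul_smul η, mul_comm η, ← smul_smul, smul_add η, smul_smul η, hη, one_smul,
        add_comm (s0 ε)]
  | succ m ih =>
    obtain ⟨ihl, ihr⟩ := ih
    rw [bB_succ]
    constructor
    · have e : s0 ε * (bB ε η (m+1) * V ε m * bB ε η (m+1)) =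
          η • (bB ε η (m+1) * V ε m * bB ε η (m+1)) := by
        rw [← mul_assoc, ← mul_assoc, ihl, smul_mul_assoc, smul_mul_assoc]
      rw [mul_add, mul_smul_comm, e, ihl, smul_add, smul_smul, smul_smul, mul_comm η (cc ε (m+1))]
    · have e : (bB ε η (m+1) * V ε m * bB ε η (m+1)) * s0 ε =
          η • (bB ε η (m+1) * V ε m * bB ε η (m+1)) := by
        rw [mul_assoc, ihr, mul_smul_comm]
      rw [add_mul, smul_mul_assoc, e, ihr, smul_add, smul_smul, smul_smul, mul_comm η (cc ε (m+1))]

/-- The main inductive package: idempotency, annihilation, absorption, partial trace. -/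
theorem pack (hη : η * η = 1) (he : ε * ε = 1) : ∀ m,
    (bB ε η (m+1) * bB ε η (m+1) = bB ε η (m+1)) ∧
    (∀ i, i + 2 ≤ m + 1 → bB ε η (m+1) * V ε i = 0 ∧ V ε i * bB ε η (m+1) = 0) ∧
    (bB ε η (m+1) * bB ε η m = bB ε η (m+1) ∧ bB ε η m * bB ε η (m+1) = bB ε η (m+1)) ∧
    (V ε m * bB ε η (m+1) * V ε m = gam ε (m+1) • (bB ε η m * V ε m)) := by
  intro m
  induction m with
  | zero =>
    refine ⟨?_, ?_, ⟨?_, ?_⟩, ?_⟩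
    · have expand : ((1:TLB ε) + η • s0 ε) * ((1:TLB ε) + η • s0 ε) =
          ((1:TLB ε) + η • s0 ε) + ((1:TLB ε) + η • s0 ε) := by
        rw [add_mul, one_mul, smul_mul_assoc, mul_add, mul_one, mul_smul_comm, r5,
          smul_add, smul_smul, hη, one_smul]
        abel
      show ((2:Kq)⁻¹ • (1 + η • s0 ε)) * ((2:Kq)⁻¹ • (1 + η • s0 ε)) =
        (2:Kq)⁻¹ • (1 + η • s0 ε)
      rw [smul_mul_assoc, mul_smul_comm, expand, half_two]
    · intro i hi; exact absurd hi (by omega)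
    · show bB ε η 1 * 1 = bB ε η 1; rw [mul_one]
    · show 1 * bB ε η 1 = bB ε η 1; rw [one_mul]
    · show V ε 0 * ((2:Kq)⁻¹ • (1 + η • s0 ε)) * V ε 0 = gam ε 1 • ((1:TLB ε) * V ε 0)
      rw [mul_smul_comm, smul_mul_assoc, mul_add, mul_one, mul_smul_comm, add_mul,
        smul_mul_assoc, r1, r6, smul_zero, add_zero, smul_smul, one_mul]
      rfl
  | succ m ih =>
    obtain ⟨hI, hK, ⟨hA1, hA2⟩, hT⟩ := ih
    have hcX : V ε (m+1) * bB ε η (m+1) = bB ε η (m+1) * V ε (m+1) :=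
      Vcomm_b ε η (m+1) (m+1) le_rfl
    have hcW : V ε m * bB ε η m = bB ε η m * V ε m := Vcomm_b ε η m m le_rfl
    have hs : 1 + cc ε (m+1) * gam ε (m+1) = 0 := hscal ε he m
    have newT : V ε (m+1) * bB ε η (m+2) * V ε (m+1) =
        gam ε (m+2) • (bB ε η (m+1) * V ε (m+1)) := by
      rw [bB_succ]
      have h := L_trace (ε := ε) (bB ε η (m+1)) (V ε m) (V ε (m+1)) (cc ε (m+1))
        hI hcX (r1 ε (m+1)) (r4 ε m)
      rw [h]
      rfl
    have newI : bB ε η (m+2) * bB ε η (m+2) = bB ε η (m+2) := by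
      rw [bB_succ]
      exact L_idem _ _ _ _ _ hI hT hA1 hs
    have newA := L_absorb (bB ε η (m+1)) (V ε m) (cc ε (m+1)) hI
    refine ⟨newI, ?_, ⟨?_, ?_⟩, newT⟩
    · intro i hi
      rcases Nat.lt_or_ge (i+2) (m+2) with h | h
      · obtain ⟨k1, k2⟩ := hK i (by omega)
        rw [bB_succ]
        exact ⟨L_kill_far_r _ _ _ _ k1, L_kill_far_l _ _ _ _ k2⟩
      · have : i = m := by omega
        subst this
        rw [bB_succ]
        constructor
        · exact L_kill_r _ _ _ _ _ hT hA1 hs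
        · exact L_kill_l _ _ _ _ _ hT hcW hA2 hs
    · rw [bB_succ]; exact newA.1
    · rw [bB_succ]; exact newA.2

end Pack
/-! ### Lemmas about `dD` -/

theorem sdD (ε : Kq) (m : ℕ) :
    s0 ε * dD ε (m+1) = bB ε 1 (m+1) - bB ε (-1) (m+1) := by
  rw [dD, mul_add, (s_bB ε 1 (by norm_num) m).1, (s_bB ε (-1) (by norm_num) m).1, one_smul,
    show (-1:Kq) = -(1:Kq) from rfl, negsm, one_smul, ← sub_eq_add_neg]

theorem dDs (ε : Kq) (m : ℕ) :
    dD ε (m+1) * s0 ε = bB ε 1 (m+1) - bB ε (-1) (m+1) := by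
  rw [dD, add_mul, (s_bB ε 1 (by norm_num) m).2, (s_bB ε (-1) (by norm_num) m).2, one_smul,
    show (-1:Kq) = -(1:Kq) from rfl, negsm, one_smul, ← sub_eq_add_neg]

theorem bform (ε : Kq) (m : ℕ) (η : Kq) (hη : η = 1 ∨ η = -1) :
    bB ε η (m+1) = (2:Kq)⁻¹ • (dD ε (m+1) + η • (s0 ε * dD ε (m+1))) := by
  rcases hη with rfl | rfl
  · rw [sdD, one_smul, dD,
      show bB ε 1 (m+1) + bB ε (-1) (m+1) + (bB ε 1 (m+1) - bB ε (-1) (m+1)) =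
        bB ε 1 (m+1) + bB ε 1 (m+1) from by abel, half_two]
  · rw [sdD, show (-1:Kq) = -(1:Kq) from rfl, negsm, one_smul]
    rw [dD, show bB ε 1 (m+1) + bB ε (-1) (m+1) + -(bB ε 1 (m+1) - bB ε (-1) (m+1)) =
        bB ε (-1) (m+1) + bB ε (-1) (m+1) from by abel, half_two]

theorem bform_pos (ε : Kq) (m : ℕ) :
    bB ε 1 (m+1) = (2:Kq)⁻¹ • (dD ε (m+1) + s0 ε * dD ε (m+1)) := by
  rw [bform ε m 1 (Or.inl rfl), one_smul]

theorem bform_neg (ε : Kq) (m : ℕ) :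
    bB ε (-1) (m+1) = (2:Kq)⁻¹ • (dD ε (m+1) - s0 ε * dD ε (m+1)) := by
  rw [bform ε m (-1) (Or.inr rfl), show (-1:Kq) = -(1:Kq) from rfl, negsm, one_smul,
    ← sub_eq_add_neg]

theorem half_expand (ε : Kq) (x y u : TLB ε) :
    ((2:Kq)⁻¹•(x+y))*u*((2:Kq)⁻¹•(x+y)) + ((2:Kq)⁻¹•(x-y))*u*((2:Kq)⁻¹•(x-y))
      = (2:Kq)⁻¹•(x*u*x + y*u*y) := by
  have e1 : ∀ z : TLB ε, ((2:Kq)⁻¹•z)*u*((2:Kq)⁻¹•z) = ((2:Kq)⁻¹*(2:Kq)⁻¹)•(z*u*z) := by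
    intro z
    rw [smul_mul_assoc, smul_mul_assoc, mul_smul_comm, smul_smul]
  rw [e1, e1, ← smul_add]
  have e2 : (x+y)*u*(x+y) + (x-y)*u*(x-y) = (x*u*x + y*u*y) + (x*u*x + y*u*y) := by
    have p1 : ∀ a b : TLB ε, (a+b)*u*(a+b) = a*u*a + a*u*b + (b*u*a + b*u*b) := by
      intro a b
      rw [add_mul, mul_add, add_mul, add_mul]
      abel
    rw [sub_eq_add_neg x y, p1, p1]
    simp only [mulneg, negmul, neg_neg]
    abel
  rw [e2, ← smul_smul, half_two]

theorem d_rec (ε : Kq) (m : ℕ) (hm : 1 ≤ m) :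
    dD ε (m+2) = dD ε (m+1) + cc ε (m+1) • (dD ε (m+1) * V ε m * dD ε (m+1)) := by
  have hswap : s0 ε * dD ε (m+1) = dD ε (m+1) * s0 ε := by rw [sdD, dDs]
  have dud : (s0 ε * dD ε (m+1)) * V ε m * (s0 ε * dD ε (m+1)) =
      dD ε (m+1) * V ε m * dD ε (m+1) := by
    calc (s0 ε * dD ε (m+1)) * V ε m * (s0 ε * dD ε (m+1))
        = (dD ε (m+1) * s0 ε) * V ε m * (dD ε (m+1) * s0 ε) := by rw [hswap]
      _ = dD ε (m+1) * (s0 ε * V ε m) * (dD ε (m+1) * s0 ε) := by noncomm_ring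
      _ = dD ε (m+1) * (V ε m * s0 ε) * (dD ε (m+1) * s0 ε) := by rw [r7 ε hm]
      _ = dD ε (m+1) * V ε m * (s0 ε * dD ε (m+1)) * s0 ε := by noncomm_ring
      _ = dD ε (m+1) * V ε m * (dD ε (m+1) * s0 ε) * s0 ε := by rw [hswap]
      _ = dD ε (m+1) * V ε m * dD ε (m+1) * (s0 ε * s0 ε) := by noncomm_ring
      _ = dD ε (m+1) * V ε m * dD ε (m+1) := by rw [r5, mul_one]
  have key : bB ε 1 (m+1) * V ε m * bB ε 1 (m+1) +
      bB ε (-1) (m+1) * V ε m * bB ε (-1) (m+1) =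
      dD ε (m+1) * V ε m * dD ε (m+1) := by
    rw [bform_pos, bform_neg, half_expand, dud, half_two]
  calc dD ε (m+2)
      = (bB ε 1 (m+1) + bB ε (-1) (m+1)) +
        cc ε (m+1) • (bB ε 1 (m+1) * V ε m * bB ε 1 (m+1) +
          bB ε (-1) (m+1) * V ε m * bB ε (-1) (m+1)) := by
        rw [dD, bB_succ, bB_succ, smul_add]
        abel
    _ = dD ε (m+1) + cc ε (m+1) • (dD ε (m+1) * V ε m * dD ε (m+1)) := by
        rw [key, dD]

theorem dD_one (ε : Kq) : dD ε 1 = 1 := by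
  show (2:Kq)⁻¹ • (1 + (1:Kq) • s0 ε) + (2:Kq)⁻¹ • (1 + (-1:Kq) • s0 ε) = 1
  rw [one_smul, show (-1:Kq) = -(1:Kq) from rfl, negsm, one_smul, ← sub_eq_add_neg]
  rw [← smul_add, show (1:TLB ε) + s0 ε + (1 - s0 ε) = 1 + 1 from by abel, half_two]

theorem dD_two (ε : Kq) : dD ε 2 = 1 + (cc ε 1 * (2:Kq)⁻¹) • V ε 0 +
    (cc ε 1 * (2:Kq)⁻¹) • (s0 ε * V ε 0 * s0 ε) := by
  have h1 : bB ε 1 1 = (2:Kq)⁻¹ • ((1:TLB ε) + s0 ε) := by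
    show (2:Kq)⁻¹ • (1 + (1:Kq) • s0 ε) = _
    rw [one_smul]
  have h1m : bB ε (-1) 1 = (2:Kq)⁻¹ • ((1:TLB ε) - s0 ε) := by
    show (2:Kq)⁻¹ • (1 + (-1:Kq) • s0 ε) = _
    rw [show (-1:Kq) = -(1:Kq) from rfl, negsm, one_smul, ← sub_eq_add_neg]
  calc dD ε 2
      = (bB ε 1 1 + bB ε (-1) 1) + cc ε 1 • (bB ε 1 1 * V ε 0 * bB ε 1 1 +
          bB ε (-1) 1 * V ε 0 * bB ε (-1) 1) := by
        rw [dD, bB_succ, bB_succ, smul_add]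
        abel
    _ = 1 + cc ε 1 • ((2:Kq)⁻¹ • ((1:TLB ε) * V ε 0 * 1 + s0 ε * V ε 0 * s0 ε)) := by
        rw [show bB ε 1 1 + bB ε (-1) 1 = (1:TLB ε) from dD_one ε, h1, h1m, half_expand]
    _ = 1 + (cc ε 1 * (2:Kq)⁻¹) • V ε 0 +
          (cc ε 1 * (2:Kq)⁻¹) • (s0 ε * V ε 0 * s0 ε) := by
        rw [one_mul, mul_one, smul_smul, smul_add, add_assoc]

/-! ### Span machinery -/

section SpanLemmas

variable {A : Type*} [Ring A] [Algebra Kq A] (S : Set A)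

def NgenOf : Set A := {y | ∃ l : List A, l ≠ [] ∧ (∀ a ∈ l, a ∈ S) ∧ y = l.prod}

def NOf : Submodule Kq A := Submodule.span Kq (NgenOf S)

theorem S_sub_N : ∀ a ∈ S, a ∈ NOf S := fun a ha =>
  Submodule.subset_span ⟨[a], by simp, by simpa using ha, List.prod_singleton.symm⟩

theorem N_mul (x y : A) (hx : x ∈ NOf S) (hy : y ∈ NOf S) : x * y ∈ NOf S := by
  have h : NOf S * NOf S ≤ NOf S := by
    rw [NOf, Submodule.span_mul_span]
    apply Submodule.span_le.2
    rintro z ⟨a, ha, b, hb, rfl⟩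
    obtain ⟨l1, hl1, hm1, rfl⟩ := ha
    obtain ⟨l2, hl2, hm2, rfl⟩ := hb
    refine Submodule.subset_span ⟨l1 ++ l2, by simp [hl1], ?_, (List.prod_append).symm⟩
    intro c hc
    rcases List.mem_append.1 hc with h | h
    · exact hm1 c h
    · exact hm2 c h
  exact h (Submodule.mul_mem_mul hx hy)

theorem N_kill_r (y : A) (hy : ∀ a ∈ S, y * a = 0) : ∀ x ∈ NOf S, y * x = 0 := by
  intro x hx
  induction hx using Submodule.span_induction with
  | mem z hz =>
    obtain ⟨l, hl, hmem, rfl⟩ := hz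
    match l, hl, hmem with
    | (a :: t), _, hmem =>
      rw [List.prod_cons, ← mul_assoc, hy a (hmem a List.mem_cons_self), zero_mul]
  | zero => exact mul_zero y
  | add a b _ _ ha hb => rw [mul_add, ha, hb, add_zero]
  | smul c a _ ha => rw [mul_smul_comm, ha, smul_zero]

theorem N_kill_l (y : A) (hy : ∀ a ∈ S, a * y = 0) : ∀ x ∈ NOf S, x * y = 0 := by
  have aux : ∀ l : List A, l ≠ [] → (∀ a ∈ l, a ∈ S) → l.prod * y = 0 := by
    intro l
    induction l with
    | nil => intro h; exact absurd rfl h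
    | cons a t ih =>
      intro _ hmem
      rcases eq_or_ne t [] with rfl | ht
      · simp only [List.prod_cons, List.prod_nil, mul_one]
        exact hy a (hmem a List.mem_cons_self)
      · rw [List.prod_cons, mul_assoc,
          ih ht (fun b hb => hmem b (List.mem_cons_of_mem a hb)), mul_zero]
  intro x hx
  induction hx using Submodule.span_induction with
  | mem z hz =>
    obtain ⟨l, hl, hmem, rfl⟩ := hz
    exact aux l hl hmem
  | zero => exact zero_mul y
  | add a b _ _ ha hb => rw [add_mul, ha, hb, add_zero]
  | smul c a _ ha => rw [smul_mul_assoc, ha, smul_zero]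

theorem adjoin_decomp (x : A) (hx : x ∈ Algebra.adjoin Kq S) :
    ∃ c : Kq, x - c • 1 ∈ NOf S := by
  have hx' : x ∈ Submodule.span Kq (Submonoid.closure S : Set A) := by
    rw [← Algebra.adjoin_eq_span]
    exact hx
  clear hx
  induction hx' using Submodule.span_induction with
  | mem z hz =>
    obtain ⟨l, hmem, rfl⟩ := Submonoid.exists_list_of_mem_closure hz
    rcases eq_or_ne l [] with rfl | hl
    · exact ⟨1, by simp⟩
    · refine ⟨0, ?_⟩
      have hm : l.prod ∈ NgenOf S :=
        show ∃ l' : List A, l' ≠ [] ∧ (∀ a ∈ l', a ∈ S) ∧ List.prod l = l'.prod from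
          ⟨l, hl, hmem, rfl⟩
      simpa [NOf] using Submodule.subset_span hm
  | zero => exact ⟨0, by simp⟩
  | add a b _ _ ha hb =>
    obtain ⟨c1, h1⟩ := ha
    obtain ⟨c2, h2⟩ := hb
    refine ⟨c1 + c2, ?_⟩
    have h3 := add_mem h1 h2
    have e : a - c1 • 1 + (b - c2 • 1) = a + b - (c1 + c2) • (1:A) := by
      rw [add_smul]; abel
    rwa [e] at h3
  | smul c a _ ha =>
    obtain ⟨c1, h1⟩ := ha
    refine ⟨c * c1, ?_⟩
    have h3 := Submodule.smul_mem (NOf S) c h1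
    rwa [smul_sub, smul_smul] at h3

end SpanLemmas
theorem stmt15 (ε : Kq) (hε : ε = 1 ∨ ε = -1) (n : ℕ) (hn : 2 ≤ n) :
    (∀ x ∈ TLDsub ε n, x ≠ 0 → IsIdempotentElem x → s0 ε * x * s0 ε = x →
      (∀ i : ℕ, i ≤ n - 1 → x * UD ε i = 0 ∧ UD ε i * x = 0) →
      x = dD ε n) ∧
    ∀ η : Kq, η = 1 ∨ η = -1 →
      bB ε η n = (2 : Kq)⁻¹ • (dD ε n + η • (s0 ε * dD ε n)) := by
  obtain ⟨m, rfl⟩ : ∃ m, n = m + 2 := ⟨n - 2, by omega⟩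
  have he : ε * ε = 1 := by rcases hε with rfl | rfl <;> norm_num
  have h1η : (1:Kq) * 1 = 1 := one_mul 1
  have hmη : (-1:Kq) * (-1) = 1 := by norm_num
  constructor
  · -- uniqueness
    intro x hx hx0 hidem _ hkill
    have hUD0 : UD ε 0 = s0 ε * V ε 0 * s0 ε := rfl
    have hUDpos : ∀ j : ℕ, UD ε (j+1) = V ε j := fun j => rfl
    -- kill properties of x over S
    have hxS : ∀ a ∈ {y | ∃ i ≤ m + 1, y = UD ε i}, x * a = 0 := by
      rintro a ⟨i, hi, rfl⟩
      exact (hkill i hi).1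
    have hSx : ∀ a ∈ {y | ∃ i ≤ m + 1, y = UD ε i}, a * x = 0 := by
      rintro a ⟨i, hi, rfl⟩
      exact (hkill i hi).2
    -- kill properties of d over S
    have hkp := pack ε 1 h1η he (m+1)
    have hkm := pack ε (-1) hmη he (m+1)
    have hdk : ∀ i, i + 2 ≤ m + 2 → dD ε (m+2) * V ε i = 0 ∧ V ε i * dD ε (m+2) = 0 := by
      intro i hi
      obtain ⟨k1, k2⟩ := hkp.2.1 i hi
      obtain ⟨k3, k4⟩ := hkm.2.1 i hi
      constructor
      · rw [dD, add_mul, k1, k3, add_zero]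
      · rw [dD, mul_add, k2, k4, add_zero]
    have hdS : ∀ a ∈ {y | ∃ i ≤ m + 1, y = UD ε i}, dD ε (m+2) * a = 0 := by
      rintro a ⟨i, hi, rfl⟩
      match i, hi with
      | 0, _ =>
        rw [hUD0]
        have h01 : dD ε (m+2) * (s0 ε * V ε 0 * s0 ε) =
            (dD ε (m+2) * s0 ε) * V ε 0 * s0 ε := by noncomm_ring
        rw [h01, dDs ε (m+1), sub_mul,
          (hkp.2.1 0 (by omega)).1, (hkm.2.1 0 (by omega)).1, sub_zero, zero_mul]
      | (j+1), hi =>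
        rw [hUDpos j]
        exact (hdk j (by omega)).1
    have hSd : ∀ a ∈ {y | ∃ i ≤ m + 1, y = UD ε i}, a * dD ε (m+2) = 0 := by
      rintro a ⟨i, hi, rfl⟩
      match i, hi with
      | 0, _ =>
        rw [hUD0]
        have h01 : (s0 ε * V ε 0 * s0 ε) * dD ε (m+2) =
            s0 ε * V ε 0 * (s0 ε * dD ε (m+2)) := by noncomm_ring
        rw [h01, sdD ε (m+1), mul_sub,
          show s0 ε * V ε 0 * bB ε 1 (m+2) = s0 ε * (V ε 0 * bB ε 1 (m+2)) from
            mul_assoc _ _ _,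
          show s0 ε * V ε 0 * bB ε (-1) (m+2) = s0 ε * (V ε 0 * bB ε (-1) (m+2)) from
            mul_assoc _ _ _,
          (hkp.2.1 0 (by omega)).2, (hkm.2.1 0 (by omega)).2, mul_zero, sub_zero]
      | (j+1), hi =>
        rw [hUDpos j]
        exact (hdk j (by omega)).2
    -- membership of dD - 1 in N
    have hV_mem : ∀ j, j + 1 ≤ m + 1 → V ε j ∈ NOf {y | ∃ i ≤ m + 1, y = UD ε i} := by
      intro j hj
      exact S_sub_N _ _ (show ∃ i ≤ m + 1, V ε j = UD ε i from ⟨j + 1, by omega, (hUDpos j).symm⟩)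
    have hUD0_mem : s0 ε * V ε 0 * s0 ε ∈ NOf {y | ∃ i ≤ m + 1, y = UD ε i} :=
      S_sub_N _ _ (show ∃ i ≤ m + 1, s0 ε * V ε 0 * s0 ε = UD ε i from ⟨0, by omega, hUD0.symm⟩)
    have dmem : ∀ k, k + 2 ≤ m + 2 → dD ε (k+2) - 1 ∈ NOf {y | ∃ i ≤ m + 1, y = UD ε i} := by
      intro k
      induction k with
      | zero =>
        intro _
        have h2 : dD ε 2 - 1 = (cc ε 1 * (2:Kq)⁻¹) • V ε 0 +
            (cc ε 1 * (2:Kq)⁻¹) • (s0 ε * V ε 0 * s0 ε) := by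
          rw [dD_two]; abel
        rw [h2]
        exact add_mem (Submodule.smul_mem _ _ (hV_mem 0 (by omega)))
          (Submodule.smul_mem _ _ hUD0_mem)
      | succ k ih =>
        intro hk
        have hw := ih (by omega)
        have hVk : V ε (k+1) ∈ NOf {y | ∃ i ≤ m + 1, y = UD ε i} := hV_mem (k+1) (by omega)
        have hrec := d_rec ε (k+1) (by omega)
        have hd : dD ε (k+2) = 1 + (dD ε (k+2) - 1) := by abel
        have hprod : dD ε (k+2) * V ε (k+1) * dD ε (k+2) ∈
            NOf {y | ∃ i ≤ m + 1, y = UD ε i} := by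
          rw [hd]
          have expand : (1 + (dD ε (k+2) - 1)) * V ε (k+1) * (1 + (dD ε (k+2) - 1)) =
              V ε (k+1) + (dD ε (k+2) - 1) * V ε (k+1) +
              (V ε (k+1) * (dD ε (k+2) - 1) +
                (dD ε (k+2) - 1) * V ε (k+1) * (dD ε (k+2) - 1)) := by noncomm_ring
          rw [expand]
          exact add_mem (add_mem hVk (N_mul _ _ _ hw hVk))
            (add_mem (N_mul _ _ _ hVk hw) (N_mul _ _ _ (N_mul _ _ _ hw hVk) hw))
        have h3 : dD ε (k+1+2) - 1 = (dD ε (k+2) - 1) +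
            cc ε (k+2) • (dD ε (k+2) * V ε (k+1) * dD ε (k+2)) := by
          rw [hrec]; abel
        rw [h3]
        exact add_mem hw (Submodule.smul_mem _ _ hprod)
    -- decomposition of x
    have hxadj : x ∈ Algebra.adjoin Kq {y | ∃ i ≤ m + 1, y = UD ε i} := hx
    obtain ⟨c, hc⟩ := adjoin_decomp _ x hxadj
    have hxw : x = c • (1:TLB ε) + (x - c • 1) := by abel
    have hxm : x * (x - c • 1) = 0 := N_kill_r _ x hxS _ hc
    have hxx : x * x = c • x := by
      calc x * x = x * (c • (1:TLB ε) + (x - c • 1)) := by rw [← hxw]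
        _ = c • x := by rw [mul_add, mul_smul_comm, mul_one, hxm, add_zero]
    have hc1 : c = 1 := by
      by_contra hne
      have h1 : (1 - c) ≠ 0 := sub_ne_zero.2 (Ne.symm hne)
      have h2 : (1 - c) • x = 0 := by
        rw [subsm, one_smul, ← hxx, hidem.eq, sub_self]
      exact hx0 (by
        calc x = (1-c)⁻¹ • ((1-c) • x) := by
              rw [smul_smul, inv_mul_cancel₀ h1, one_smul]
          _ = 0 := by rw [h2, smul_zero])
    subst hc1
    rw [one_smul] at hc
    have e1 : x * dD ε (m+2) = dD ε (m+2) := by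
      calc x * dD ε (m+2) = (1 + (x - 1)) * dD ε (m+2) := by
            rw [show (1:TLB ε) + (x-1) = x from by abel]
        _ = dD ε (m+2) + (x-1) * dD ε (m+2) := by rw [add_mul, one_mul]
        _ = dD ε (m+2) := by rw [N_kill_l _ (dD ε (m+2)) hSd _ hc, add_zero]
    have e2 : x * dD ε (m+2) = x := by
      have hd1 : dD ε (m+2) = 1 + (dD ε (m+2) - 1) := by abel
      calc x * dD ε (m+2) = x * (1 + (dD ε (m+2) - 1)) := by rw [← hd1]
        _ = x + x * (dD ε (m+2) - 1) := by rw [mul_add, mul_one]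
        _ = x := by rw [N_kill_r _ x hxS _ (dmem m le_rfl), add_zero]
    exact e2.symm.trans e1
  · -- the formula for bB
    intro η hη
    exact bform ε (m+1) η hη

end
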